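/- Let m ≥ 1, let ρ̌ > 0 and ρ̂ > 0 with ρ̂/ρ̌ an integer ≥ 2, and let R(M̌) := B_{ρ̂/2}(M̌) ∩ Δ_ρ̂ for nonempty M̌ ⊆ Δ_ρ̌. Then for every nonempty M̌ ⊆ Δ_ρ̌: (i) B_{ρ̌/2}(M̌) ⊆ B_{ρ̂/2}(R(M̌)), i.e. R(M̌) is a Voronoi cover of M̌ in Δ_ρ̂; and (ii) every nonempty M̂ ⊆ Δ_ρ̂ with B_{ρ̌/2}(M̌) ⊆ B_{ρ̂/2}(M̂) satisfies R(M̌) ⊆ M̂, i.e. R(M̌) is the minimal Voronoi cover. -/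

import Mathlib

noncomputable section

lemma roundlem (n : ℕ) (hn : 2 ≤ n) (k : ℤ) :
    ∃ q : ℤ, -(n:ℝ)/2 ≤ (k:ℝ) - n*q ∧ (k:ℝ) - n*q ≤ ((n:ℝ)-1)/2 := by
  have hn0 : (0:ℝ) < n := by
    have : (2:ℝ) ≤ n := by exact_mod_cast hn
    linarith
  set q : ℤ := round ((k:ℝ)/n) with hqdef
  have h1 : (q:ℝ) ≤ (k:ℝ)/n + 1/2 := by
    rw [hqdef, round_eq]; exact_mod_cast Int.floor_le _
  have h2 : (k:ℝ)/n + 1/2 - 1 < (q:ℝ) := by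
    rw [hqdef, round_eq]; exact_mod_cast Int.sub_one_lt_floor _
  refine ⟨q, ?_, ?_⟩
  · have := mul_le_mul_of_nonneg_left h1 hn0.le
    rw [mul_add, mul_div_cancel₀ _ hn0.ne'] at this
    nlinarith
  · have hlt : (k:ℝ) - n*q < (n:ℝ)/2 := by
      have := mul_lt_mul_of_pos_left h2 hn0
      rw [mul_sub, mul_add, mul_div_cancel₀ _ hn0.ne', mul_one] at this
      linarith
    have hint : 2*(k - n*q) < (n:ℤ) := by
      have : ((2*(k - n*q) : ℤ) : ℝ) < ((n:ℤ) : ℝ) := by push_cast; nlinarith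
      exact_mod_cast this
    have : 2*(k - n*q) ≤ (n:ℤ) - 1 := by omega
    have : ((2*(k - n*q) : ℤ) : ℝ) ≤ (((n:ℤ) - 1 : ℤ) : ℝ) := by exact_mod_cast this
    push_cast at this
    linarith

lemma keylem (n : ℕ) (hn : 2 ≤ n) (t : ℝ) (k : ℤ) (δ : ℝ) (hδ : 0 ≤ δ)
    (h : |t - k| ≤ 1/2 + δ) :
    ∃ q : ℤ, |(k : ℝ) - n * q| ≤ n/2 ∧ |t - n * q| ≤ n/2 + δ := by
  have hn0 : (0:ℝ) < n := by
    have : (2:ℝ) ≤ n := by exact_mod_cast hn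
    linarith
  rcases abs_le.1 h with ⟨hl, hr⟩
  rcases le_or_gt (k:ℝ) t with hc | hc
  · obtain ⟨q, hq1, hq2⟩ := roundlem n hn k
    exact ⟨q, abs_le.2 ⟨by linarith, by linarith⟩, abs_le.2 ⟨by linarith, by linarith⟩⟩
  · obtain ⟨q', hq1, hq2⟩ := roundlem n hn (-k)
    refine ⟨-q', abs_le.2 ⟨?_, ?_⟩, abs_le.2 ⟨?_, ?_⟩⟩ <;> push_cast at hq1 hq2 ⊢ <;> linarith

/-- Integer sharpening: if an integer `a` satisfies `|a| < (n+1)/2` then `|a| ≤ n/2`. -/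
lemma intsharp (n : ℕ) (a : ℤ) (h : |(a:ℝ)| < ((n:ℝ)+1)/2) : |(a:ℝ)| ≤ (n:ℝ)/2 := by
  have h1 : (2*|a| : ℤ) < (n:ℤ) + 1 := by
    have : ((2*|a| : ℤ) : ℝ) < (((n:ℤ)+1 : ℤ) : ℝ) := by push_cast; linarith
    exact_mod_cast this
  have h2 : (2*|a| : ℤ) ≤ (n:ℤ) := by omega
  have : ((2*|a| : ℤ) : ℝ) ≤ (((n:ℤ) : ℤ) : ℝ) := by exact_mod_cast h2
  push_cast at this
  linarith

/-- The grid `Δ_ρ = ρℤ^m` in `ℝ^m` (with the maximum norm). -/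
def grid (m : ℕ) (ρ : ℝ) : Set (Fin m → ℝ) := {x | ∀ j, ∃ k : ℤ, x j = ρ * k}

/-- `B_δ(A)`: the closed `δ`-neighbourhood of `A` in the maximum norm. -/
def nbhd (m : ℕ) (δ : ℝ) (A : Set (Fin m → ℝ)) : Set (Fin m → ℝ) :=
  {x | Metric.infDist x A ≤ δ}

/-- The restriction operator `R(M̌) = B_{ρ̂/2}(M̌) ∩ Δ_ρ̂`. -/
def Rop (m : ℕ) (rh : ℝ) (M : Set (Fin m → ℝ)) : Set (Fin m → ℝ) :=
  nbhd m (rh / 2) M ∩ grid m rh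

/-- The interpolation operator `I(M̂) = B_{ρ̂/2}(M̂) ∩ Δ_ρ̌`. -/
def Iop (m : ℕ) (rc rh : ℝ) (M : Set (Fin m → ℝ)) : Set (Fin m → ℝ) :=
  nbhd m (rh / 2) M ∩ grid m rc

theorem stmt14 (m : ℕ) (hm : 1 ≤ m) (rc rh : ℝ) (hrc : 0 < rc) (hrh : 0 < rh)
    (n : ℕ) (hn : 2 ≤ n) (hq : rh = (n : ℝ) * rc)
    (Mc : Set (Fin m → ℝ)) (hMc : Mc ⊆ grid m rc) (hne : Mc.Nonempty) :
    -- (i) `R(M̌)` is a Voronoi cover of `M̌` in `Δ_ρ̂`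
    nbhd m (rc / 2) Mc ⊆ nbhd m (rh / 2) (Rop m rh Mc) ∧
    -- (ii) `R(M̌)` is contained in every Voronoi cover of `M̌` in `Δ_ρ̂`
    (∀ Mh : Set (Fin m → ℝ), Mh ⊆ grid m rh → Mh.Nonempty →
      nbhd m (rc / 2) Mc ⊆ nbhd m (rh / 2) Mh → Rop m rh Mc ⊆ Mh) := by
  have hn2 : (2:ℝ) ≤ (n:ℝ) := by exact_mod_cast hn
  have hn0 : (0:ℝ) < n := by linarith
  have hrcrh : 2 * rc ≤ rh := by nlinarith
  constructor
  · -- part (i)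
    intro x hx
    simp only [nbhd, Set.mem_setOf_eq] at hx ⊢
    by_contra hcon
    push_neg at hcon
    set ε : ℝ := Metric.infDist x (Rop m rh Mc) - rh / 2 with hεdef
    have hε : 0 < ε := by rw [hεdef]; linarith
    obtain ⟨c, hcMc, hcd⟩ := (Metric.infDist_lt_iff hne).1
      (lt_of_le_of_lt hx (by linarith : rc/2 < rc/2 + ε/2))
    choose k hk using fun j => hMc hcMc j
    have key : ∀ j, ∃ q : ℤ, |(k j : ℝ) - n * q| ≤ n/2 ∧ |x j / rc - n * q| ≤ n/2 + ε/(2*rc) := by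
      intro j
      refine keylem n hn (x j / rc) (k j) (ε/(2*rc)) (by positivity) ?_
      have hco : dist (x j) (c j) ≤ dist x c := dist_le_pi_dist x c j
      rw [Real.dist_eq] at hco
      have hxc : |x j - c j| < rc/2 + ε/2 := lt_of_le_of_lt hco hcd
      have hkc : c j = rc * k j := hk j
      obtain ⟨hxc1, hxc2⟩ := abs_le.1 hxc.le
      rw [abs_le]
      constructor
      · have hh : -(1/2 + ε/(2*rc)) * rc = -(rc/2 + ε/2) := by field_simp
        rw [div_sub' hrc.ne', le_div_iff₀ hrc, hh, ← hkc]
        linarith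
      · have hh : (1/2 + ε/(2*rc)) * rc = rc/2 + ε/2 := by field_simp
        rw [div_sub' hrc.ne', div_le_iff₀ hrc, hh, ← hkc]
        linarith
    choose q hq1 hq2 using key
    set g : Fin m → ℝ := fun j => rh * q j with hgdef
    have hgR : g ∈ Rop m rh Mc := by
      refine ⟨?_, fun j => ⟨q j, rfl⟩⟩
      simp only [nbhd, Set.mem_setOf_eq]
      refine le_trans (Metric.infDist_le_dist_of_mem hcMc) ?_
      rw [dist_pi_le_iff (by positivity)]
      intro j
      rw [Real.dist_eq, hk j, hgdef, hq]
      have := hq1 j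
      have heqq : (n:ℝ) * rc * q j - rc * k j = rc * -((k j : ℝ) - n * q j) := by ring
      calc |(n:ℝ) * rc * q j - rc * k j| = rc * |(k j : ℝ) - n * q j| := by
            rw [heqq, abs_mul, abs_neg, abs_of_pos hrc]
        _ ≤ rc * (n/2) := by nlinarith [abs_nonneg ((k j : ℝ) - n * q j)]
        _ = (n:ℝ) * rc / 2 := by ring
    have hdxg : dist x g ≤ rh/2 + ε/2 := by
      rw [dist_pi_le_iff (by positivity)]
      intro j
      rw [Real.dist_eq, hgdef, hq]
      have h2 := hq2 j
      have heqq : x j - (n:ℝ) * rc * q j = rc * (x j / rc - n * q j) := by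
        field_simp
      rw [heqq, abs_mul, abs_of_pos hrc]
      have hub : rc * |x j / rc - (n:ℝ) * q j| ≤ rc * (n/2 + ε/(2*rc)) := by
        nlinarith [abs_nonneg (x j / rc - (n:ℝ) * q j)]
      calc rc * |x j / rc - (n:ℝ) * q j| ≤ rc * (n/2 + ε/(2*rc)) := hub
        _ = (n:ℝ) * rc / 2 + ε/2 := by field_simp
    have hfin : Metric.infDist x (Rop m rh Mc) ≤ rh/2 + ε/2 :=
      le_trans (Metric.infDist_le_dist_of_mem hgR) hdxg
    rw [hεdef] at hε hfin
    linarith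
  · -- part (ii)
    intro Mh hMh hMhne hcover g hg
    obtain ⟨hgnb, hggrid⟩ := hg
    simp only [nbhd, Set.mem_setOf_eq] at hgnb
    obtain ⟨c, hcMc, hcd⟩ := (Metric.infDist_lt_iff hne).1
      (lt_of_le_of_lt hgnb (by linarith : rh/2 < rh/2 + rc/2))
    choose k hk using fun j => hMc hcMc j
    choose a ha using hggrid
    -- coordinatewise: |g j - c j| ≤ rh/2
    have hcoord : ∀ j, |g j - c j| ≤ rh/2 := by
      intro j
      have hco : dist (g j) (c j) ≤ dist g c := dist_le_pi_dist g c j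
      rw [Real.dist_eq] at hco
      have hlt : |g j - c j| < rh/2 + rc/2 := lt_of_le_of_lt hco hcd
      have heq : g j - c j = rc * ((n:ℤ) * a j - k j : ℤ) := by
        rw [ha j, hk j, hq]; push_cast; ring
      rw [heq, abs_mul, abs_of_pos hrc] at hlt ⊢
      have : |(((n:ℤ) * a j - k j : ℤ) : ℝ)| < ((n:ℝ)+1)/2 := by
        rw [hq] at hlt
        nlinarith
      have := intsharp n _ this
      rw [hq]
      nlinarith
    set x : Fin m → ℝ := fun j => c j + (rc/rh) * (g j - c j) with hxdef
    have hx1 : ∀ j, |x j - c j| ≤ rc/2 := by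
      intro j
      have : x j - c j = (rc/rh) * (g j - c j) := by rw [hxdef]; ring
      rw [this, abs_mul, abs_of_pos (by positivity : (0:ℝ) < rc/rh)]
      have := hcoord j
      rw [div_mul_eq_mul_div, div_le_iff₀ hrh]
      nlinarith [abs_nonneg (g j - c j)]
    have hx2 : ∀ j, |x j - g j| ≤ rh/2 - rc/2 := by
      intro j
      have heq : x j - g j = (1 - rc/rh) * (c j - g j) := by
        show c j + (rc/rh) * (g j - c j) - g j = (1 - rc/rh) * (c j - g j)
        field_simp
        ring
      have h1 : 0 ≤ 1 - rc/rh := by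
        rw [sub_nonneg, div_le_one hrh]; linarith
      rw [heq, abs_mul, abs_of_nonneg h1, abs_sub_comm]
      have := hcoord j
      have hrr : (1 - rc/rh) * (rh/2) = rh/2 - rc/2 := by field_simp
      nlinarith [abs_nonneg (g j - c j)]
    have hxMc : x ∈ nbhd m (rc/2) Mc := by
      simp only [nbhd, Set.mem_setOf_eq]
      refine le_trans (Metric.infDist_le_dist_of_mem hcMc) ?_
      rw [dist_pi_le_iff (by positivity)]
      intro j
      rw [Real.dist_eq]; exact hx1 j
    have hxMh : Metric.infDist x Mh ≤ rh/2 := hcover hxMc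
    by_contra hgMh
    obtain ⟨y, hyMh, hyd⟩ := (Metric.infDist_lt_iff hMhne).1
      (lt_of_le_of_lt hxMh (by linarith : rh/2 < rh/2 + rc/2))
    -- y ≠ g, so some coordinate differs by at least rh
    have hyg : y ≠ g := fun h => hgMh (h ▸ hyMh)
    obtain ⟨j, hj⟩ := Function.ne_iff.1 hyg
    obtain ⟨b, hb⟩ := hMh hyMh j
    have hsep : rh ≤ |y j - g j| := by
      have hba : b ≠ a j := by
        intro h; apply hj; rw [hb, ha j, h]
      have : y j - g j = rh * ((b - a j : ℤ) : ℝ) := by rw [hb, ha j]; push_cast; ring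
      rw [this, abs_mul, abs_of_pos hrh]
      have h1 : (1:ℝ) ≤ |((b - a j : ℤ) : ℝ)| := by
        rw [← Int.cast_abs]
        exact_mod_cast Int.one_le_abs (sub_ne_zero.2 hba)
      nlinarith
    have hxy : rh/2 + rc/2 ≤ dist x y := by
      have hco : dist (x j) (y j) ≤ dist x y := dist_le_pi_dist x y j
      rw [Real.dist_eq] at hco
      have h2 := hx2 j
      have : rh/2 + rc/2 ≤ |x j - y j| := by
        have := abs_sub_abs_le_abs_sub (y j - g j) (x j - g j)
        have h3 : |y j - g j - (x j - g j)| = |x j - y j| := by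
          rw [show y j - g j - (x j - g j) = -(x j - y j) by ring, abs_neg]
        rw [h3] at this
        linarith
      linarith
    linarith
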